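/- Let d ∈ ℕ, let ν be a Lévy measure on ℝ, let G ∈ L¹(ℝ^d), let 0 < r < R, and assume ∫_{|ρ|>1} |ρ| (∫_0^{1/|ρ|} d_{G_R}(α) λ¹(dα)) ν(dρ) < ∞, where G_R(x) := ∫_{B_R(x)} |G(y)| λ^d(dy). Let (φ_n) be a sequence of bounded measurable functions on ℝ^d with φ_n(y) = 0 for ‖y‖ ≥ r and ‖φ_n‖_∞ → 0 as n → ∞. Then ∫_{ℝ^d} ∫_ℝ |ρ·(φ_n*G)(x)| · |𝟙_{|ρ(φ_n*G)(x)| ≤ 1} − 𝟙_{|ρ| ≤ 1}| ν(dρ) λ^d(dx) → 0 as n → ∞. -/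

import Mathlib

open MeasureTheory ENNReal Filter Topology

noncomputable section

/-- `ℝ^d` with the Euclidean structure. -/
abbrev Rd (d : ℕ) := EuclideanSpace ℝ (Fin d)

/-- The distribution function `d_f(α) = λ^d {x : |f x| > α}`. -/
def distFun {d : ℕ} (f : Rd d → ℝ) (α : ℝ) : ℝ≥0∞ := volume {x | α < |f x|}

/-- The convolution `(φ * G)(x) = ∫ G(y) φ(x - y) dy`. -/
def conv {d : ℕ} (φ G : Rd d → ℝ) (x : Rd d) : ℝ := ∫ y, G y * φ (x - y)

/-- `G_R(x) = ∫_{B_R(x)} |G(y)| dy`. -/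
def ballInt {d : ℕ} (G : Rd d → ℝ) (R : ℝ) (x : Rd d) : ℝ := ∫ y in Metric.ball x R, |G y|

lemma ballInt_nonneg {d : ℕ} (G : Rd d → ℝ) (R : ℝ) (x : Rd d) : 0 ≤ ballInt G R x :=
  integral_nonneg fun _ => abs_nonneg _

lemma ballInt_congr {d : ℕ} {G G' : Rd d → ℝ} (h : G =ᵐ[volume] G') (R : ℝ) :
    ballInt G R = ballInt G' R := by
  funext x
  refine integral_congr_ae ?_
  exact ae_restrict_of_ae (h.mono fun y hy => by simp [hy])

lemma measurable_ballInt {d : ℕ} {G : Rd d → ℝ} (hG : Measurable G) (R : ℝ) :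
    Measurable (ballInt G R) := by
  have hjoint : Measurable fun p : Rd d × Rd d =>
      (Metric.ball p.1 R).indicator (fun y => ENNReal.ofReal |G y|) p.2 := by
    have hset : MeasurableSet {p : Rd d × Rd d | p.2 ∈ Metric.ball p.1 R} := by
      have : IsOpen {p : Rd d × Rd d | dist p.2 p.1 < R} :=
        isOpen_lt (continuous_dist.comp (continuous_snd.prodMk continuous_fst)) continuous_const
      exact this.measurableSet
    have : (fun p : Rd d × Rd d => (Metric.ball p.1 R).indicator (fun y => ENNReal.ofReal |G y|) p.2)
        = {p : Rd d × Rd d | p.2 ∈ Metric.ball p.1 R}.indicator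
            (fun p => ENNReal.ofReal |G p.2|) := by
      funext p
      by_cases hp : p.2 ∈ Metric.ball p.1 R
      · simp [Set.indicator_apply, hp, Metric.mem_ball.mp hp]
      · simp [Set.indicator_apply, hp, not_lt.mpr (Metric.mem_ball.not.mp hp |> not_lt.mp)]
    rw [this]
    exact Measurable.indicator (measurable_ofReal.comp (hG.comp measurable_snd).abs) hset
  have hmeas : Measurable fun x => ∫⁻ y, (Metric.ball x R).indicator
      (fun y => ENNReal.ofReal |G y|) y := hjoint.lintegral_prod_right'
  have heq : ballInt G R = fun x => (∫⁻ y, (Metric.ball x R).indicator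
      (fun y => ENNReal.ofReal |G y|) y).toReal := by
    funext x
    rw [ballInt, integral_eq_lintegral_of_nonneg_ae (Filter.Eventually.of_forall fun y => abs_nonneg _)
      (hG.abs.aestronglyMeasurable.restrict), lintegral_indicator measurableSet_ball]
  rw [heq]
  exact hmeas.ennreal_toReal

lemma layercake_min {d : ℕ} {g : Rd d → ℝ} (hg : Measurable g) (hg0 : ∀ x, 0 ≤ g x)
    {ρ : ℝ} (hρ : 1 < |ρ|) :
    ∫⁻ x, min 1 (ENNReal.ofReal (|ρ| * g x)) ≤
      ENNReal.ofReal |ρ| * ∫⁻ α in Set.Ioc (0:ℝ) (1/|ρ|), volume {x : Rd d | α < g x} := by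
  set s := 1/|ρ| with hs_def
  have hρ0 : (0:ℝ) < |ρ| := lt_trans one_pos hρ
  have hs : 0 < s := by positivity
  have hmono : Monotone ENNReal.ofReal := fun _ _ h => ENNReal.ofReal_le_ofReal h
  have h1 : ∀ x, min 1 (ENNReal.ofReal (|ρ| * g x)) = ENNReal.ofReal (|ρ| * min s (g x)) := by
    intro x
    have h2 : |ρ| * min s (g x) = min 1 (|ρ| * g x) := by
      rw [mul_min_of_nonneg _ _ hρ0.le, mul_one_div_cancel hρ0.ne']
    rw [h2, hmono.map_min, ENNReal.ofReal_one]
  simp_rw [h1, ENNReal.ofReal_mul hρ0.le]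
  rw [lintegral_const_mul' _ _ ofReal_ne_top]
  refine mul_le_mul' le_rfl ?_
  rw [lintegral_eq_lintegral_meas_lt volume
    (Filter.Eventually.of_forall fun x => le_min hs.le (hg0 x))
    (measurable_const.min hg).aemeasurable]
  calc ∫⁻ t in Set.Ioi 0, volume {a : Rd d | t < min s (g a)}
      ≤ ∫⁻ t in Set.Ioi 0,
          (Set.Ioc (0:ℝ) s).indicator (fun α => volume {x : Rd d | α < g x}) t := by
        refine lintegral_mono_ae ?_
        refine (ae_restrict_iff' measurableSet_Ioi).2 (Filter.Eventually.of_forall fun t ht => ?_)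
        by_cases hts : t < s
        · rw [Set.indicator_of_mem (Set.mem_Ioc.mpr ⟨ht, hts.le⟩)]
          refine measure_mono fun a ha => ?_
          simp only [Set.mem_setOf_eq, lt_min_iff] at ha ⊢
          exact ha.2
        · have hsub : {a : Rd d | t < min s (g a)} ⊆ ∅ := fun a ha =>
            absurd (lt_of_lt_of_le ha (min_le_left _ _)) hts
          exact le_trans ((measure_mono hsub).trans_eq measure_empty) bot_le
    _ = ∫⁻ t in Set.Ioc 0 s, volume {x : Rd d | t < g x} := by
        rw [lintegral_indicator measurableSet_Ioc, Measure.restrict_restrict measurableSet_Ioc,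
          Set.inter_eq_self_of_subset_left Set.Ioc_subset_Ioi_self]

lemma conv_le_ballInt {d : ℕ} {φ G : Rd d → ℝ} (hφ : Measurable φ) (hG : Integrable G volume)
    {C r R : ℝ} (hC : ∀ y, |φ y| ≤ C) (hsupp : ∀ y, r ≤ ‖y‖ → φ y = 0) (hrR : r < R)
    (x : Rd d) :
    |conv φ G x| ≤ C * ballInt G R x ∧ |conv φ G x| ≤ C * ∫ y, |G y| := by
  have hC0 : 0 ≤ C := le_trans (abs_nonneg _) (hC 0)
  have hm : AEStronglyMeasurable (fun y => φ (x - y)) volume :=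
    (hφ.comp (measurable_const.sub measurable_id)).aestronglyMeasurable
  have hint : Integrable (fun y => G y * φ (x - y)) volume := by
    simpa [mul_comm] using hG.bdd_mul hm (Filter.Eventually.of_forall fun y => by simpa [Real.norm_eq_abs] using hC (x - y))
  have hinta : Integrable (fun y => |G y| * |φ (x - y)|) volume := by
    simpa [abs_mul] using hint.abs
  have habs : |conv φ G x| ≤ ∫ y, |G y| * |φ (x - y)| := by
    simpa [Real.norm_eq_abs, abs_mul, conv] using
      norm_integral_le_integral_norm (fun y => G y * φ (x - y))
  constructor
  · refine habs.trans ?_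
    have hbd : ∀ y, |G y| * |φ (x - y)| ≤ C * (Metric.ball x R).indicator (fun y => |G y|) y := by
      intro y
      by_cases hy : y ∈ Metric.ball x R
      · rw [Set.indicator_of_mem hy, mul_comm (C : ℝ)]
        exact mul_le_mul_of_nonneg_left (hC _) (abs_nonneg _)
      · have : r ≤ ‖x - y‖ := by
          rw [← dist_eq_norm, dist_comm]
          exact le_trans hrR.le (not_lt.mp (by simpa [Metric.mem_ball] using hy))
        rw [hsupp _ this, Set.indicator_of_notMem hy]
        simp
    calc ∫ y, |G y| * |φ (x - y)|
        ≤ ∫ y, C * (Metric.ball x R).indicator (fun y => |G y|) y :=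
          integral_mono hinta
            (((hG.abs).indicator measurableSet_ball).const_mul C) hbd
      _ = C * ballInt G R x := by
          rw [integral_const_mul, integral_indicator measurableSet_ball, ballInt]
  · refine habs.trans ?_
    calc ∫ y, |G y| * |φ (x - y)|
        ≤ ∫ y, C * |G y| :=
          integral_mono hinta (hG.abs.const_mul C) (fun y => by
            rw [mul_comm (C : ℝ)]
            exact mul_le_mul_of_nonneg_left (hC _) (abs_nonneg _))
      _ = C * ∫ y, |G y| := integral_const_mul _ _
/-- under the integrability condition (ass2) on the Lévy measure `ν`,
the compensator-type integrals of `φ_n * G` tend to `0` when `‖φ_n‖_∞ → 0`. -/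
theorem statement2 {d : ℕ} (hd : 0 < d) (ν : Measure ℝ)
    (hν0 : ν {0} = 0)
    (hνlevy : ∫⁻ ρ, ENNReal.ofReal (min 1 (ρ ^ 2)) ∂ν < ⊤)
    (G : Rd d → ℝ) (hG : MeasureTheory.Integrable G volume)
    (r R : ℝ) (hr : 0 < r) (hrR : r < R)
    (hass2 : ∫⁻ ρ in {ρ : ℝ | 1 < |ρ|},
        (ENNReal.ofReal |ρ| * ∫⁻ α in Set.Ioc (0 : ℝ) (1 / |ρ|),
          distFun (ballInt G R) α) ∂ν < ⊤)
    (φ : ℕ → Rd d → ℝ)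
    (hφm : ∀ n, Measurable (φ n))
    (hφb : ∀ n, BddAbove (Set.range fun y => |φ n y|))
    (hφs : ∀ n, ∀ y : Rd d, r ≤ ‖y‖ → φ n y = 0)
    (hφ0 : Tendsto (fun n => ⨆ y, |φ n y|) atTop (𝓝 (0 : ℝ))) :
    Tendsto (fun n => ∫⁻ x, ∫⁻ ρ,
        ENNReal.ofReal (|ρ * conv (φ n) G x| *
          |(if |ρ * conv (φ n) G x| ≤ 1 then (1 : ℝ) else 0) -
            (if |ρ| ≤ 1 then (1 : ℝ) else 0)|) ∂ν)
      atTop (𝓝 (0 : ℝ≥0∞)) := by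
  classical
  set M : ℝ := ∫ y, |G y| with hM_def
  have hM0 : 0 ≤ M := integral_nonneg fun _ => abs_nonneg _
  set c : ℕ → ℝ := fun n => ⨆ y, |φ n y| with hc_def
  have hcb : ∀ n y, |φ n y| ≤ c n := fun n y => le_ciSup (hφb n) y
  have hc0 : ∀ n, 0 ≤ c n := fun n => le_trans (abs_nonneg _) (hcb n 0)
  obtain ⟨G', hG'm, hGG'⟩ : ∃ G', Measurable G' ∧ G =ᵐ[volume] G' :=
    ⟨hG.1.aemeasurable.mk _, hG.1.aemeasurable.measurable_mk, hG.1.aemeasurable.ae_eq_mk⟩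
  set g : Rd d → ℝ := ballInt G R with hg_def
  have hgm : Measurable g := by
    rw [hg_def, ballInt_congr hGG' R]
    exact measurable_ballInt hG'm R
  have hg0 : ∀ x, 0 ≤ g x := ballInt_nonneg G R
  set S : Set ℝ := {ρ : ℝ | 1 < |ρ|} with hS_def
  have hSm : MeasurableSet S := measurableSet_lt measurable_const measurable_abs
  have hνS : ν S < ⊤ := by
    rw [← setLIntegral_one S]
    refine lt_of_le_of_lt (le_trans (setLIntegral_mono (by fun_prop) ?_)
      (setLIntegral_le_lintegral _ _)) hνlevy
    intro ρ hρ
    have h1 : (1:ℝ) < |ρ| := hρ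
    have h2 : (1:ℝ) ≤ min 1 (ρ ^ 2) := by
      refine le_min le_rfl ?_
      nlinarith [sq_abs ρ]
    calc (1:ℝ≥0∞) = ENNReal.ofReal 1 := ofReal_one.symm
      _ ≤ ENNReal.ofReal (min 1 (ρ ^ 2)) := ofReal_le_ofReal h2
  haveI : IsFiniteMeasure (ν.restrict S) := ⟨by rwa [Measure.restrict_apply_univ]⟩
  have hdist : ∀ α, distFun (ballInt G R) α = volume {x : Rd d | α < g x} := by
    intro α
    unfold distFun
    congr 1
    ext x
    simp [abs_of_nonneg (hg0 x), hg_def, abs_of_nonneg (ballInt_nonneg G R x)]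
  have hkey : ∀ ρ ∈ S, ∫⁻ x, min 1 (ENNReal.ofReal (|ρ| * g x)) ≤
      ENNReal.ofReal |ρ| * ∫⁻ α in Set.Ioc (0:ℝ) (1/|ρ|), distFun (ballInt G R) α := by
    intro ρ hρ
    simp_rw [hdist]
    exact layercake_min hgm hg0 hρ
  -- product measure setup
  set μprod : Measure (ℝ × Rd d) := (ν.restrict S).prod volume with hμprod_def
  set F : ℕ → ℝ × Rd d → ℝ≥0∞ :=
    fun n p => min 1 (ENNReal.ofReal (min (c n) 1 * |p.1| * g p.2)) with hF_def
  have hF_meas : ∀ n, Measurable (F n) := by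
    intro n
    exact measurable_const.min
      (((measurable_const.mul measurable_fst.abs).mul (hgm.comp measurable_snd)).ennreal_ofReal)
  set dom : ℝ × Rd d → ℝ≥0∞ := fun p => min 1 (ENNReal.ofReal (|p.1| * g p.2)) with hdom_def
  have hdom_meas : Measurable dom :=
    measurable_const.min ((measurable_fst.abs.mul (hgm.comp measurable_snd)).ennreal_ofReal)
  have hdom_fin : ∫⁻ p, dom p ∂μprod ≠ ⊤ := by
    rw [hμprod_def, lintegral_prod _ hdom_meas.aemeasurable]
    refine ne_top_of_le_ne_top hass2.ne ?_
    refine lintegral_mono_ae ((ae_restrict_iff' hSm).2 (Filter.Eventually.of_forall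
      fun ρ hρ => ?_))
    exact hkey ρ hρ
  have hF_bound : ∀ n, F n ≤ᵐ[μprod] dom := by
    intro n
    refine Filter.Eventually.of_forall fun p => ?_
    refine min_le_min le_rfl (ofReal_le_ofReal ?_)
    have h1 : min (c n) 1 ≤ 1 := min_le_right _ _
    calc min (c n) 1 * |p.1| * g p.2 = min (c n) 1 * (|p.1| * g p.2) := mul_assoc _ _ _
      _ ≤ |p.1| * g p.2 :=
        mul_le_of_le_one_left (mul_nonneg (abs_nonneg p.1) (hg0 p.2)) h1
  have hF_lim : ∀ p : ℝ × Rd d, Tendsto (fun n => F n p) atTop (𝓝 0) := by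
    intro p
    have h2 : Tendsto (fun n => min (c n) 1) atTop (𝓝 (min 0 1)) :=
      hφ0.min tendsto_const_nhds
    have h1 : Tendsto (fun n => min (c n) 1 * |p.1| * g p.2) atTop (𝓝 0) := by
      have := (h2.mul_const |p.1|).mul_const (g p.2)
      simpa using this
    have h3 : Tendsto (fun n => ENNReal.ofReal (min (c n) 1 * |p.1| * g p.2)) atTop (𝓝 0) := by
      rw [← ENNReal.ofReal_zero]
      exact (ENNReal.continuous_ofReal.tendsto 0).comp h1
    have h4 := (tendsto_const_nhds : Tendsto (fun _ : ℕ => (1:ℝ≥0∞)) atTop (𝓝 1)).min h3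
    simpa using h4
  have hJ : Tendsto (fun n => ∫⁻ p, F n p ∂μprod) atTop (𝓝 0) := by
    have := tendsto_lintegral_of_dominated_convergence (μ := μprod) (F := F)
      (f := fun _ => 0) dom hF_meas hF_bound hdom_fin
      (Filter.Eventually.of_forall hF_lim)
    simpa using this
  -- eventual bound
  have hble : ∀ᶠ n in atTop,
      (∫⁻ x, ∫⁻ ρ, ENNReal.ofReal (|ρ * conv (φ n) G x| *
          |(if |ρ * conv (φ n) G x| ≤ 1 then (1 : ℝ) else 0) -
            (if |ρ| ≤ 1 then (1 : ℝ) else 0)|) ∂ν)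
        ≤ ∫⁻ p, F n p ∂μprod := by
    have hpos : 0 < min 1 (1/(M+1)) := by positivity
    filter_upwards [hφ0.eventually_lt_const hpos] with n hn
    have hc1 : c n ≤ 1 := (hn.trans_le (min_le_left _ _)).le
    have hcM : c n * M ≤ 1 := by
      have h2 : c n < 1/(M+1) := hn.trans_le (min_le_right _ _)
      have h3 : 0 < M + 1 := by linarith
      rw [lt_div_iff₀ h3] at h2
      nlinarith [hc0 n]
    have claim : ∀ x ρ, ENNReal.ofReal (|ρ * conv (φ n) G x| *
          |(if |ρ * conv (φ n) G x| ≤ 1 then (1 : ℝ) else 0) -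
            (if |ρ| ≤ 1 then (1 : ℝ) else 0)|)
        ≤ S.indicator (fun ρ => min 1 (ENNReal.ofReal (min (c n) 1 * |ρ| * g x))) ρ := by
      intro x ρ
      obtain ⟨hf2, hf1⟩ := conv_le_ballInt (hφm n) hG (hcb n) (hφs n) hrR x
      set f := conv (φ n) G x with hf_def
      by_cases hρS : ρ ∈ S
      · rw [Set.indicator_of_mem hρS]
        have hρ1 : ¬ (|ρ| ≤ 1) := not_le.mpr hρS
        rw [if_neg hρ1]
        by_cases h1 : |ρ * f| ≤ 1
        · rw [if_pos h1]
          refine le_min ?_ ?_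
          · calc ENNReal.ofReal (|ρ * f| * |(1:ℝ) - 0|) = ENNReal.ofReal |ρ * f| := by norm_num
              _ ≤ ENNReal.ofReal 1 := ofReal_le_ofReal h1
              _ = 1 := ofReal_one
          · refine ofReal_le_ofReal ?_
            have h5 : |ρ * f| ≤ min (c n) 1 * |ρ| * g x := by
              rw [abs_mul, min_eq_left hc1]
              calc |ρ| * |f| ≤ |ρ| * (c n * g x) :=
                    mul_le_mul_of_nonneg_left hf2 (abs_nonneg ρ)
                _ = c n * |ρ| * g x := by ring
            calc |ρ * f| * |(1:ℝ) - 0| = |ρ * f| := by norm_num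
              _ ≤ min (c n) 1 * |ρ| * g x := h5
        · rw [if_neg h1]
          simp
      · rw [Set.indicator_of_notMem hρS]
        have hρ1 : |ρ| ≤ 1 := not_lt.mp (by simpa [hS_def] using hρS)
        have hfle1 : |ρ * f| ≤ 1 := by
          rw [abs_mul]
          calc |ρ| * |f| ≤ 1 * (c n * M) :=
                mul_le_mul hρ1 hf1 (abs_nonneg _) zero_le_one
            _ = c n * M := one_mul _
            _ ≤ 1 := hcM
        rw [if_pos hfle1, if_pos hρ1]
        simp
    calc (∫⁻ x, ∫⁻ ρ, ENNReal.ofReal (|ρ * conv (φ n) G x| *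
          |(if |ρ * conv (φ n) G x| ≤ 1 then (1 : ℝ) else 0) -
            (if |ρ| ≤ 1 then (1 : ℝ) else 0)|) ∂ν)
        ≤ ∫⁻ x, ∫⁻ ρ, S.indicator
            (fun ρ => min 1 (ENNReal.ofReal (min (c n) 1 * |ρ| * g x))) ρ ∂ν :=
          lintegral_mono fun x => lintegral_mono fun ρ => claim x ρ
      _ = ∫⁻ x, ∫⁻ ρ in S, min 1 (ENNReal.ofReal (min (c n) 1 * |ρ| * g x)) ∂ν := by
          simp_rw [lintegral_indicator hSm]
      _ = ∫⁻ ρ in S, ∫⁻ x, min 1 (ENNReal.ofReal (min (c n) 1 * |ρ| * g x)) ∂volume ∂ν := by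
          refine lintegral_lintegral_swap ?_
          exact (measurable_const.min
            (((measurable_const.mul measurable_snd.abs).mul
              (hgm.comp measurable_fst)).ennreal_ofReal)).aemeasurable
      _ = ∫⁻ p, F n p ∂μprod := by
          rw [hμprod_def, lintegral_prod _ (hF_meas n).aemeasurable]
  refine tendsto_of_tendsto_of_tendsto_of_le_of_le' tendsto_const_nhds hJ
    (Filter.Eventually.of_forall fun n => bot_le) hble
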